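/- (Cone splitting principle) Let u : ℝ^m → ℝ^ℓ be a function that is invariant under translations by a k-dimensional linear subspace V ⊆ ℝ^m, is 0-homogeneous with respect to the origin (u(λx) = u(x) for all λ > 0, x ∈ ℝ^m), and is also 0-homogeneous with respect to a point z ∉ V (u(z + λv) = u(z + v) for all λ > 0, v ∈ ℝ^m). Then u is invariant under translations by the (k+1)-dimensional subspace span(V ∪ {z}). -/
import Mathlib


/-- **Cone splitting principle.** Let `u : ℝᵐ → ℝˡ` be invariant under
translations by a `k`-dimensional linear subspace `V ⊆ ℝᵐ`, `0`-homogeneous with respect to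
the origin, and `0`-homogeneous with respect to a point `z ∉ V`.  Then `u` is invariant under
translations by the `(k+1)`-dimensional subspace `span (V ∪ {z})`. -/
theorem cone_splitting_principle (m l k : ℕ) (u : (Fin m → ℝ) → (Fin l → ℝ))
    (V : Submodule ℝ (Fin m → ℝ)) (hV : Module.finrank ℝ V = k)
    (htrans : ∀ x : Fin m → ℝ, ∀ v ∈ V, u (x + v) = u x)
    (hhom : ∀ lam : ℝ, 0 < lam → ∀ x : Fin m → ℝ, u (lam • x) = u x)
    (z : Fin m → ℝ) (hz : z ∉ V)
    (hhomz : ∀ lam : ℝ, 0 < lam → ∀ v : Fin m → ℝ, u (z + lam • v) = u (z + v)) :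
    Module.finrank ℝ ↥(V ⊔ Submodule.span ℝ {z}) = k + 1 ∧
      ∀ x : Fin m → ℝ, ∀ v ∈ V ⊔ Submodule.span ℝ {z}, u (x + v) = u x := by
  -- invariance along `s • z` for `s < 1`
  have hA : ∀ s : ℝ, s < 1 → ∀ x : Fin m → ℝ, u (x + s • z) = u x := by
    intro s hs x
    have h1 : (0:ℝ) < 1 - s := by linarith
    have h2 : (0:ℝ) < (1 - s)⁻¹ := inv_pos.mpr h1
    have e1 : x + s • z = z + (1 - s) • ((1 - s)⁻¹ • x - z) := by
      rw [smul_sub, smul_smul, mul_inv_cancel₀ h1.ne']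
      module
    have e2 : z + ((1 - s)⁻¹ • x - z) = (1 - s)⁻¹ • x := by abel
    rw [e1, hhomz _ h1, e2, hhom _ h2]
  -- invariance along `z`
  have hz1 : ∀ x : Fin m → ℝ, u (x + z) = u x := by
    intro x
    have := hA (-1) (by norm_num) (x + z)
    have e : x + z + (-1 : ℝ) • z = x := by module
    rw [e] at this
    exact this.symm
  -- invariance along `n • z`
  have hzn : ∀ n : ℕ, ∀ x : Fin m → ℝ, u (x + (n : ℝ) • z) = u x := by
    intro n
    induction n with
    | zero => intro x; simp
    | succ n ih =>
      intro x
      have e : x + ((n + 1 : ℕ) : ℝ) • z = (x + z) + (n : ℝ) • z := by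
        push_cast; module
      rw [e, ih, hz1]
  -- invariance along any `s • z`
  have hall : ∀ s : ℝ, ∀ x : Fin m → ℝ, u (x + s • z) = u x := by
    intro s x
    rcases lt_or_ge s 1 with h | h
    · exact hA s h x
    · set n : ℕ := ⌈s⌉₊ with hn
      have hsn : s - n < 1 := by
        have : s ≤ n := Nat.le_ceil s
        linarith
      have e : x + s • z = (x + (n : ℝ) • z) + (s - n) • z := by module
      rw [e, hA _ hsn, hzn]
  have hz0 : z ≠ 0 := fun h => hz (h ▸ V.zero_mem)
  constructor
  · -- rank computation
    have hinf : V ⊓ Submodule.span ℝ {z} = ⊥ := by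
      rw [eq_bot_iff]
      rintro y ⟨hyV, hyz⟩
      rcases Submodule.mem_span_singleton.mp hyz with ⟨c, rfl⟩
      rcases eq_or_ne c 0 with rfl | hc
      · simp
      · exact absurd (by simpa [smul_smul, inv_mul_cancel₀ hc] using V.smul_mem c⁻¹ hyV) hz
    have h1 : Module.finrank ℝ (Submodule.span ℝ ({z} : Set (Fin m → ℝ))) = 1 :=
      finrank_span_singleton hz0
    have := Submodule.finrank_sup_add_finrank_inf_eq V (Submodule.span ℝ {z})
    rw [hinf, hV, h1] at this
    simpa using this
  · -- invariance
    intro x v hv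
    rcases Submodule.mem_sup.mp hv with ⟨w, hw, y, hy, rfl⟩
    rcases Submodule.mem_span_singleton.mp hy with ⟨c, rfl⟩
    have e : x + (w + c • z) = (x + c • z) + w := by abel
    rw [e, htrans _ _ hw, hall]
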